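/- arXiv:1005.3248 — 4 statements merged into one kernel-verified Lean document; each statement's English description precedes it below -/
import Mathlib

section
/- Let 𝒢 be a Grothendieck category and 𝒮 a set of objects of 𝒢. Then there exists a set I of monomorphisms of 𝒢 such that: (a) the class of objects isomorphic to the cokernel of some member of I is exactly the class of objects isomorphic to objects of 𝒮, and (b) for every short exact sequence 0 → A → B → S → 0 with S ∈ 𝒮 there exist a morphism i : A′ → B′ in I and morphisms A′ → A, B′ → B forming a commutative diagram with exact rows 0 → A′ → B′ → S → 0 and 0 → A → B → S → 0 and the identity on S. -/
universe w v u

open CategoryTheory CategoryTheory.Limits Opposite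

namespace Paper

variable {C : Type u} [Category.{v} C]

/-- The linearly ordered (small) category of ordinals `< lam`. -/
abbrev Idx (lam : Ordinal.{w}) : Type (w + 1) := {α : Ordinal.{w} // α < lam}

/-- Morphisms in `Idx lam` from inequalities of the underlying ordinals. -/
def idxLe {lam : Ordinal.{w}} {a b : Idx lam} (h : a.1 ≤ b.1) : a ⟶ b :=
  homOfLE h

/-- The inclusion `Idx γ ⥤ Idx lam` for `γ < lam`. -/
def idxRes {lam γ : Ordinal.{w}} (hγ : γ < lam) : Idx γ ⥤ Idx lam :=
  Monotone.functor (f := fun b => ⟨b.1, b.2.trans hγ⟩) (fun _ _ h => h)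

/-- Given a functor `F : Idx lam ⥤ C` and `γ < lam`, the cocone over the restriction
of `F` to `Idx γ` whose point is `F.obj ⟨γ, hγ⟩`. -/
def restrictCocone {lam γ : Ordinal.{w}} (F : Idx lam ⥤ C) (hγ : γ < lam) :
    Cocone (idxRes hγ ⋙ F) where
  pt := F.obj ⟨γ, hγ⟩
  ι :=
    { app := fun b => F.map (idxLe b.2.le)
      naturality := by
        intro a b f
        dsimp [idxRes]
        rw [Category.comp_id, ← F.map_comp]
        congr 1 }

/-- A functor `F : Idx lam ⥤ C` is a `λ`-sequence if for every limit ordinal `γ < lam`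
the canonical cocone expressing `F.obj γ` as the colimit of the earlier terms is colimiting. -/
structure IsLamSeq {lam : Ordinal.{w}} (F : Idx lam ⥤ C) : Prop where
  smooth : ∀ (γ : Ordinal.{w}) (hγ : γ < lam), Order.IsSuccLimit γ →
    Nonempty (IsColimit (restrictCocone F hγ))

/-- The map `F.obj α ⟶ F.obj (α+1)` of a sequence. -/
def toSucc {lam : Ordinal.{w}} (F : Idx lam ⥤ C) (α : Ordinal.{w})
    (h : Order.succ α < lam) :
    F.obj ⟨α, (Order.lt_succ α).trans h⟩ ⟶ F.obj ⟨Order.succ α, h⟩ :=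
  F.map (idxLe (Order.le_succ α))

/-- All successor maps of the sequence `F` belong to the class of morphisms `M`. -/
def SuccIn {lam : Ordinal.{w}} (F : Idx lam ⥤ C) (M : MorphismProperty C) : Prop :=
  ∀ (α : Ordinal.{w}) (h : Order.succ α < lam), M (toSucc F α h)

/-- `f : X ⟶ Y` is a transfinite composition of morphisms from `M`: there is a
`λ`-sequence starting (up to isomorphism) at `X`, with all successor maps in `M`,
whose colimit exists, such that `f` is (up to isomorphism) the canonical morphism from
`X` to the colimit. -/
def IsTransfiniteCompositionOf (M : MorphismProperty C) : MorphismProperty C := fun X Y f =>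
  ∃ (lam : Ordinal.{w}) (hlam : (0 : Ordinal.{w}) < lam) (F : Idx lam ⥤ C),
    IsLamSeq F ∧ SuccIn F M ∧
      ∃ (c : Cocone F), Nonempty (IsColimit c) ∧
        ∃ (e0 : X ≅ F.obj ⟨0, hlam⟩) (e1 : c.pt ≅ Y),
          f = e0.hom ≫ c.ι.app ⟨0, hlam⟩ ≫ e1.hom

section Abelian

variable [Abelian C]

/-- `Ext¹(S, T) = 0`, expressed via the (Yoneda) description of `Ext¹`: every short
exact sequence `0 ⟶ T ⟶ Z ⟶ S ⟶ 0` splits. -/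
def Ext1IsZero (S T : C) : Prop :=
  ∀ (Z : C) (f : T ⟶ Z) (g : Z ⟶ S) (w : f ≫ g = 0),
    (ShortComplex.mk f g w).ShortExact → ∃ r : Z ⟶ T, f ≫ r = 𝟙 T

/-- The class of monomorphisms whose cokernel is isomorphic to an object of `S`. -/
def MonoCokerIn (S : Set C) : MorphismProperty C := fun _ _ i =>
  Mono i ∧ ∃ Z ∈ S, Nonempty (cokernel i ≅ Z)

/-- `X` is `S`-filtered: the morphism `0 ⟶ X` is the composition of a `λ`-sequence
starting at a zero object, all of whose successor maps are monomorphisms with cokernel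
isomorphic to an object of `S`. -/
def IsFiltObj (S : Set C) (X : C) : Prop :=
  ∃ (lam : Ordinal.{w}) (hlam : (0 : Ordinal.{w}) < lam) (F : Idx lam ⥤ C),
    IsLamSeq F ∧ SuccIn F (MonoCokerIn S) ∧ IsZero (F.obj ⟨0, hlam⟩) ∧
      ∃ (c : Cocone F), Nonempty (IsColimit c) ∧ Nonempty (c.pt ≅ X)

end Abelian

-- A Grothendieck category: an abelian category with a separator (generator), with all
-- colimits, in which filtered colimits are exact (AB5).
variable {C : Type u} [Category.{v} C] [Abelian C] [HasColimits C] [AB5 C] [HasSeparator C]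

/-- Coproduct of copies of the separator indexed by a set of morphisms to `S`. -/
noncomputable def uObj {S : C} (U : Set (separator C ⟶ S)) : C :=
  ∐ (fun (_ : U) => separator C)

/-- The canonical map from `uObj U` to `S`. -/
noncomputable def uHom {S : C} (U : Set (separator C ⟶ S)) : uObj U ⟶ S :=
  Sigma.desc (fun u => u.1)

lemma epi_uHom {B S : C} (g : B ⟶ S) [Epi g] :
    Epi (uHom (Set.range (fun t : separator C ⟶ B => t ≫ g))) := by
  rw [Preadditive.epi_iff_cancel_zero]
  intro Z c hc
  have hg : g ≫ c = 0 := by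
    refine (isSeparator_separator C).def _ _ fun t => ?_
    rw [comp_zero]
    have := Sigma.ι (fun (_ : Set.range (fun t : separator C ⟶ B => t ≫ g)) => separator C)
      ⟨t ≫ g, ⟨t, rfl⟩⟩ ≫= hc
    simp only [uHom] at this
    erw [Sigma.ι_desc_assoc, comp_zero] at this
    simpa using this
  rw [← cancel_epi g, hg, comp_zero]

lemma shortExact_uHom {X S : C} (h : X ⟶ S) [Epi h] :
    (ShortComplex.mk (kernel.ι h) h (kernel.condition h)).ShortExact where
  exact := ShortComplex.exact_of_f_is_kernel _ (kernelIsKernel h)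
  mono_f := by dsimp; infer_instance
  epi_g := by dsimp; infer_instance

/-- For an epi `h`, the cokernel of its kernel inclusion is `S`. -/
noncomputable def cokerKernelιIso {X S : C} (h : X ⟶ S) [Epi h] :
    cokernel (kernel.ι h) ≅ S :=
  IsColimit.coconePointUniqueUpToIso (cokernelIsCokernel (kernel.ι h))
    ((shortExact_uHom h).exact.gIsCokernel)

/-- Proposition 2.6(2): in a Grothendieck category, every set `S` of objects admits a
strongly homological set of monomorphisms `I` whose cokernels realize exactly the
isomorphism classes of objects of `S`. -/
theorem exists_strongly_homological_set {ι : Type w} (S : ι → C) :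
    ∃ (σ : Type (max w v)) (A B : σ → C) (i : ∀ k, A k ⟶ B k),
      (∀ k, Mono (i k)) ∧
      (∀ X : C, (∃ k, Nonempty (X ≅ cokernel (i k))) ↔ (∃ j, Nonempty (X ≅ S j))) ∧
      (∀ (j : ι) (A₀ B₀ : C) (f : A₀ ⟶ B₀) (g : B₀ ⟶ S j) (w : f ≫ g = 0),
        (ShortComplex.mk f g w).ShortExact →
        ∃ (k : σ) (q : B k ⟶ S j) (wq : i k ≫ q = 0),
          (ShortComplex.mk (i k) q wq).ShortExact ∧
            ∃ (a : A k ⟶ A₀) (b : B k ⟶ B₀), i k ≫ b = a ≫ f ∧ q = b ≫ g) := by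
  classical
  refine ⟨Σ j : ι, {U : Set (separator C ⟶ S j) // Epi (uHom U)},
    fun k => kernel (uHom k.2.1), fun k => uObj k.2.1, fun k => kernel.ι _,
    ?_, ?_, ?_⟩
  · intro k
    exact inferInstance
  · intro X
    constructor
    · rintro ⟨⟨j, U, hU⟩, ⟨e⟩⟩
      haveI := hU
      exact ⟨j, ⟨e ≪≫ cokerKernelιIso (uHom U)⟩⟩
    · rintro ⟨j, ⟨e⟩⟩
      haveI := epi_uHom (𝟙 (S j))
      refine ⟨⟨j, Set.range (fun t : separator C ⟶ S j => t ≫ 𝟙 (S j)), epi_uHom (𝟙 (S j))⟩, ?_⟩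
      exact ⟨e ≪≫ (cokerKernelιIso (uHom (Set.range (fun t : separator C ⟶ S j => t ≫ 𝟙 (S j))))).symm⟩
  · intro j A₀ B₀ f g w hse
    haveI : Epi g := hse.epi_g
    haveI : Mono f := hse.mono_f
    set U : Set (separator C ⟶ S j) := Set.range (fun t : separator C ⟶ B₀ => t ≫ g) with hUdef
    haveI hU : Epi (uHom U) := epi_uHom g
    refine ⟨⟨j, U, hU⟩, uHom U, kernel.condition _, shortExact_uHom _, ?_⟩
    have hb : ∀ u : U, ∃ t : separator C ⟶ B₀, t ≫ g = u.1 := fun u => u.2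
    let b : uObj U ⟶ B₀ := Sigma.desc (fun u => (hb u).choose)
    have hbg : b ≫ g = uHom U := by
      apply Sigma.hom_ext
      intro u
      simp only [b, uHom, colimit.ι_desc_assoc, colimit.ι_desc, Cofan.mk_ι_app, Sigma.ι_desc_assoc, Sigma.ι_desc]
      erw [Sigma.ι_desc_assoc]
      exact (hb u).choose_spec
    have h0 : (kernel.ι (uHom U) ≫ b) ≫ g = 0 := by
      rw [Category.assoc, hbg, kernel.condition]
    obtain ⟨a, ha⟩ := KernelFork.IsLimit.lift' hse.exact.fIsKernel (kernel.ι (uHom U) ≫ b) h0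
    exact ⟨a, b, ha.symm, hbg.symm⟩

end Paper
end

section
/- Let 𝒢 be a Grothendieck category. Suppose 0 → A → B → F → 0 is a short exact sequence (with monomorphism j : A → B) and (F_α)_{α<λ} is a λ-sequence with F_0 = 0 whose composition is 0 → F (so colim_{α<λ} F_α = F) and whose successor maps i_{α,α+1} : F_α → F_{α+1} are all monomorphisms. Then there exists a λ-sequence (B_α)_{α<λ} with B_0 = A whose composition is exactly j : A → B, such that every successor map m_{α,α+1} : B_α → B_{α+1} is a monomorphism with Coker(m_{α,α+1}) ≅ Coker(i_{α,α+1}) for all α < λ. -/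
universe w v u

open CategoryTheory CategoryTheory.Limits Opposite

namespace Paper

variable {C : Type u} [Category.{v} C]

-- A Grothendieck category: an abelian category with a separator (generator), with all
-- colimits, in which filtered colimits are exact (AB5).
variable {C : Type u} [Category.{v} C] [Abelian C] [HasColimits C] [AB5 C] [HasSeparator C]

section Aux

universe v₂ u₂ v₃ u₃

variable {𝒜 : Type u₂} [Category.{v₂} 𝒜] [Abelian 𝒜]

lemma mono_of_isPullback_of_mono {P X Y Z : 𝒜} {m : P ⟶ X} {qa : P ⟶ Y} {qb : X ⟶ Z}
    {i : Y ⟶ Z} (h : IsPullback m qa qb i) (hi : Mono i) : Mono m := by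
  constructor
  intro W x y hxy
  refine h.hom_ext hxy ?_
  rw [← cancel_mono i, Category.assoc, Category.assoc, ← h.w, ← Category.assoc, hxy,
    Category.assoc]

lemma coker_iso_of_isPullback_of_epi {P X Y Z : 𝒜} {m : P ⟶ X} {qa : P ⟶ Y} {qb : X ⟶ Z}
    {i : Y ⟶ Z} (h : IsPullback m qa qb i) (hqa : Epi qa) (hqb : Epi qb) :
    Nonempty (cokernel m ≅ cokernel i) := by
  haveI := hqa; haveI := hqb
  have w0 : m ≫ qb ≫ cokernel.π i = 0 := by
    rw [← Category.assoc, h.w, Category.assoc, cokernel.condition, comp_zero]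
  haveI : Epi (qb ≫ cokernel.π i) := epi_comp _ _
  have hc : IsColimit (CokernelCofork.ofπ (qb ≫ cokernel.π i) w0) := by
    refine CokernelCofork.IsColimit.ofπ' _ _ (fun {W} t ht => ?_)
    have hψ : kernel.ι qb ≫ t = 0 := by
      have h1 : h.lift (kernel.ι qb) 0 (by rw [kernel.condition, zero_comp]) ≫ m =
          kernel.ι qb := h.lift_fst _ _ _
      rw [← h1, Category.assoc, ht, comp_zero]
    have hix : i ≫ Abelian.epiDesc qb t hψ = 0 := by
      rw [← cancel_epi qa, comp_zero, ← Category.assoc, ← h.w, Category.assoc,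
        Abelian.comp_epiDesc, ht]
    exact ⟨cokernel.desc i (Abelian.epiDesc qb t hψ) hix, by
      rw [Category.assoc, cokernel.π_desc, Abelian.comp_epiDesc]⟩
  exact ⟨IsColimit.coconePointUniqueUpToIso (cokernelIsCokernel m) hc⟩

/-- Build `IsColimit` from an existence-and-uniqueness statement. -/
noncomputable def isColimitOfExistsUnique {J : Type u₃} [Category.{v₃} J] {E : J ⥤ 𝒜}
    (t : Cocone E)
    (H : ∀ (T : 𝒜) (s : ∀ jj : J, E.obj jj ⟶ T),
      (∀ {i jj : J} (φ : i ⟶ jj), E.map φ ≫ s jj = s i) →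
      ∃! u : t.pt ⟶ T, ∀ jj, t.ι.app jj ≫ u = s jj) : IsColimit t where
  desc s := (H s.pt s.ι.app (fun φ => s.w φ)).exists.choose
  fac s jj := (H s.pt s.ι.app (fun φ => s.w φ)).exists.choose_spec jj
  uniq s mm hm :=
    (H s.pt s.ι.app (fun φ => s.w φ)).unique hm
      (H s.pt s.ι.app (fun φ => s.w φ)).exists.choose_spec

/-- Key lemma: base change along an epimorphism preserves colimits (of connected
based diagrams) in an abelian category. -/
lemma key_existsUnique {J : Type u₃} [Category.{v₃} J] (j0 : J)
    (h0 : ∀ jj : J, Nonempty (j0 ⟶ jj))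
    {D E : J ⥤ 𝒜} (c : Cocone D) (hc : IsColimit c)
    {B' : 𝒜} (g' : B' ⟶ c.pt) (hg' : Epi g')
    (f : ∀ jj : J, E.obj jj ⟶ B') (q : E ⟶ D)
    (hf : ∀ {i jj : J} (φ : i ⟶ jj), E.map φ ≫ f jj = f i)
    (hsq : ∀ jj : J, IsPullback (f jj) (q.app jj) g' (c.ι.app jj))
    {T : 𝒜} (s : ∀ jj : J, E.obj jj ⟶ T)
    (hs : ∀ {i jj : J} (φ : i ⟶ jj), E.map φ ≫ s jj = s i) :
    ∃! u : B' ⟶ T, ∀ jj, f jj ≫ u = s jj := by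
  haveI := hg'
  have hEpiQ : ∀ jj, Epi (q.app jj) := fun jj => by
    rw [← (hsq jj).isoPullback_hom_snd]
    exact epi_comp _ _
  have hk : ∀ jj : J, ∃ kk : (kernel g' : 𝒜) ⟶ E.obj jj,
      kk ≫ f jj = kernel.ι g' ∧ kk ≫ q.app jj = 0 := fun jj =>
    ⟨(hsq jj).lift (kernel.ι g') 0 (by rw [kernel.condition, zero_comp]),
      (hsq jj).lift_fst _ _ _, (hsq jj).lift_snd _ _ _⟩
  choose k hkf hkq using hk
  have hknat : ∀ {i jj : J} (φ : i ⟶ jj), k i ≫ E.map φ = k jj := by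
    intro i jj φ
    refine (hsq jj).hom_ext ?_ ?_
    · rw [Category.assoc, hf φ, hkf, hkf]
    · rw [Category.assoc, q.naturality φ, ← Category.assoc, hkq, zero_comp, hkq]
  have ha : ∀ jj, k jj ≫ s jj = k j0 ≫ s j0 := fun jj => by
    obtain ⟨φ⟩ := h0 jj
    rw [← hknat φ, Category.assoc, hs φ]
  haveI hMinr : Mono (pushout.inr (kernel.ι g') (k j0 ≫ s j0)) := inferInstance
  have pw : kernel.ι g' ≫ g' = (k j0 ≫ s j0) ≫ (0 : T ⟶ c.pt) := by
    rw [kernel.condition, comp_zero]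
  have hπl : pushout.inl (kernel.ι g') (k j0 ≫ s j0) ≫ pushout.desc g' 0 pw = g' :=
    pushout.inl_desc _ _ _
  have hπr : pushout.inr (kernel.ι g') (k j0 ≫ s j0) ≫ pushout.desc g' 0 pw = 0 :=
    pushout.inr_desc _ _ _
  haveI hEπ : Epi (pushout.desc g' 0 pw) := epi_of_epi_fac hπl
  -- factor the `d`'s through the `q`'s
  have he : ∀ jj : J, ∃ e : D.obj jj ⟶ pushout (kernel.ι g') (k j0 ≫ s j0),
      q.app jj ≫ e = f jj ≫ pushout.inl (kernel.ι g') (k j0 ≫ s j0)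
        - s jj ≫ pushout.inr (kernel.ι g') (k j0 ≫ s j0) := by
    intro jj
    haveI := hEpiQ jj
    have hψ : kernel.lift g' (kernel.ι (q.app jj) ≫ f jj)
        (by rw [Category.assoc, (hsq jj).w, ← Category.assoc, kernel.condition, zero_comp])
        ≫ k jj = kernel.ι (q.app jj) := by
      refine (hsq jj).hom_ext ?_ ?_
      · rw [Category.assoc, hkf, kernel.lift_ι]
      · rw [Category.assoc, hkq, comp_zero, kernel.condition]
    have hkd : k jj ≫ (f jj ≫ pushout.inl (kernel.ι g') (k j0 ≫ s j0)
        - s jj ≫ pushout.inr (kernel.ι g') (k j0 ≫ s j0)) = 0 := by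
      rw [Preadditive.comp_sub, ← Category.assoc, hkf, ← Category.assoc, ha jj,
        pushout.condition, sub_self]
    have hker : kernel.ι (q.app jj) ≫ (f jj ≫ pushout.inl (kernel.ι g') (k j0 ≫ s j0)
        - s jj ≫ pushout.inr (kernel.ι g') (k j0 ≫ s j0)) = 0 := by
      rw [← hψ, Category.assoc, hkd, comp_zero]
    exact ⟨Abelian.epiDesc (q.app jj) _ hker, Abelian.comp_epiDesc _ _ _⟩
  choose e he using he
  have hnat : ∀ {i jj : J} (φ : i ⟶ jj), D.map φ ≫ e jj = e i := by
    intro i jj φ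
    haveI := hEpiQ i
    rw [← cancel_epi (q.app i), ← Category.assoc, ← q.naturality φ, Category.assoc,
      he jj, he i]
    simp only [Preadditive.comp_sub, ← Category.assoc]
    rw [hf φ, hs φ]
  obtain ⟨ee, hee⟩ : ∃ ee : c.pt ⟶ pushout (kernel.ι g') (k j0 ≫ s j0),
      ∀ jj, c.ι.app jj ≫ ee = e jj :=
    ⟨hc.desc ⟨_, ⟨e, fun i jj φ => by refine (hnat φ).trans ?_; exact (Category.comp_id _).symm⟩⟩, fun jj => hc.fac _ jj⟩
  have heπ : ee ≫ pushout.desc g' 0 pw = 𝟙 c.pt := by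
    refine hc.hom_ext fun jj => ?_
    haveI := hEpiQ jj
    have h2 : c.ι.app jj ≫ ee ≫ pushout.desc g' 0 pw = c.ι.app jj := by
      rw [← Category.assoc, hee jj, ← cancel_epi (q.app jj), ← Category.assoc, he jj,
        Preadditive.sub_comp, Category.assoc, Category.assoc, hπl, hπr, comp_zero,
        sub_zero, (hsq jj).w]
    rw [h2]; exact (Category.comp_id _).symm
  have hcoker : IsColimit (CokernelCofork.ofπ (pushout.desc g' 0 pw) hπr) := by
    refine CokernelCofork.IsColimit.ofπ' _ _ (fun {W} t ht => ?_)
    have h1 : kernel.ι g' ≫ pushout.inl (kernel.ι g') (k j0 ≫ s j0) ≫ t = 0 := by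
      rw [← Category.assoc, pushout.condition, Category.assoc, ht, comp_zero]
    refine ⟨Abelian.epiDesc g' _ h1, ?_⟩
    refine pushout.hom_ext ?_ ?_
    · rw [← Category.assoc, hπl, Abelian.comp_epiDesc]
    · rw [← Category.assoc, hπr, zero_comp, ht]
  have hu0 : (pushout.inl (kernel.ι g') (k j0 ≫ s j0) - g' ≫ ee) ≫ pushout.desc g' 0 pw
      = 0 := by
    rw [Preadditive.sub_comp, hπl, Category.assoc, heπ, Category.comp_id, sub_self]
  obtain ⟨u, hu⟩ : { l : B' ⟶ T // l ≫ pushout.inr (kernel.ι g') (k j0 ≫ s j0) =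
      pushout.inl (kernel.ι g') (k j0 ≫ s j0) - g' ≫ ee } :=
    KernelFork.IsLimit.lift' (Abelian.monoIsKernelOfCokernel _ hcoker) _ hu0
  have hufac : ∀ jj, f jj ≫ u = s jj := by
    intro jj
    rw [← cancel_mono (pushout.inr (kernel.ι g') (k j0 ≫ s j0)), Category.assoc, hu,
      Preadditive.comp_sub, ← Category.assoc, (hsq jj).w, Category.assoc, hee jj, he jj,
      sub_sub_cancel]
  refine ⟨u, hufac, fun m hm => ?_⟩
  have hv : kernel.ι g' ≫ (m - u) = 0 := by
    rw [Preadditive.comp_sub, ← hkf j0, Category.assoc, hm j0, Category.assoc, hufac j0,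
      sub_self]
  have hp := Abelian.comp_epiDesc g' (m - u) hv
  have hpz : Abelian.epiDesc g' (m - u) hv = 0 := by
    refine hc.hom_ext fun jj => ?_
    haveI := hEpiQ jj
    have h2 : c.ι.app jj ≫ Abelian.epiDesc g' (m - u) hv = 0 := by
      rw [← cancel_epi (q.app jj), comp_zero, ← Category.assoc, ← (hsq jj).w,
        Category.assoc, hp, Preadditive.comp_sub, hm jj, hufac jj, sub_self]
    rw [h2]; exact (comp_zero (f := c.ι.app jj)).symm
  have hmu : m - u = 0 := by rw [← hp, hpz, comp_zero]
  exact sub_eq_zero.mp hmu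

section PB

variable {𝒜 : Type u₂} [Category.{v₂} 𝒜] [Abelian 𝒜] {lam : Ordinal.{w}}

noncomputable def pbFunctor (Fs : Idx lam ⥤ 𝒜) (cF : Cocone Fs) {B : 𝒜} (g : B ⟶ cF.pt) :
    Idx lam ⥤ 𝒜 where
  obj α := pullback g (cF.ι.app α)
  map {a b} φ := pullback.map _ _ _ _ (𝟙 B) (Fs.map φ) (𝟙 cF.pt)
    (by rw [Category.comp_id, Category.id_comp]) (by rw [Category.comp_id, cF.w])
  map_id a := by apply pullback.hom_ext <;> simp
  map_comp φ ψ := by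
    erw [pullback.map_comp]
    simp

lemma pbFunctor_map_fst (Fs : Idx lam ⥤ 𝒜) (cF : Cocone Fs) {B : 𝒜} (g : B ⟶ cF.pt)
    {a b : Idx lam} (φ : a ⟶ b) :
    (pbFunctor Fs cF g).map φ ≫ pullback.fst g (cF.ι.app b) = pullback.fst g (cF.ι.app a) := by
  erw [pullback.lift_fst, Category.comp_id]

lemma pbFunctor_map_snd (Fs : Idx lam ⥤ 𝒜) (cF : Cocone Fs) {B : 𝒜} (g : B ⟶ cF.pt)
    {a b : Idx lam} (φ : a ⟶ b) :
    (pbFunctor Fs cF g).map φ ≫ pullback.snd g (cF.ι.app b)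
      = pullback.snd g (cF.ι.app a) ≫ Fs.map φ := by
  erw [pullback.lift_snd]

lemma pbFunctor_isPullback (Fs : Idx lam ⥤ 𝒜) (cF : Cocone Fs) {B : 𝒜} (g : B ⟶ cF.pt)
    {a b : Idx lam} (φ : a ⟶ b) :
    IsPullback ((pbFunctor Fs cF g).map φ) (pullback.snd g (cF.ι.app a))
      (pullback.snd g (cF.ι.app b)) (Fs.map φ) := by
  refine IsPullback.of_right ?_ (pbFunctor_map_snd Fs cF g φ)
    (IsPullback.of_hasPullback g (cF.ι.app b))
  rw [pbFunctor_map_fst, cF.w]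
  exact IsPullback.of_hasPullback g (cF.ι.app a)

end PB

end Aux

/-- Lemma 2.10 (refining filtrations): given a short exact sequence
`0 → A → B → F → 0` and a `λ`-sequence `(F_α)` with `F_0 = 0`, monomorphic successor
maps and colimit `F`, there is a `λ`-sequence `(B_α)` with `B_0 = A`, composition `j`,
monomorphic successor maps, and the same successor cokernels (up to isomorphism). -/
theorem refine_filtration {lam : Ordinal.{w}} (hlam : (0 : Ordinal.{w}) < lam)
    (Fs : Idx lam ⥤ C) (hFs : IsLamSeq Fs)
    (hmono : ∀ (α : Ordinal.{w}) (h : Order.succ α < lam), Mono (toSucc Fs α h))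
    (h0 : IsZero (Fs.obj ⟨0, hlam⟩))
    (cF : Cocone Fs) (hcF : IsColimit cF)
    {A B : C} (j : A ⟶ B) (g : B ⟶ cF.pt) (w : j ≫ g = 0)
    (hse : (ShortComplex.mk j g w).ShortExact) :
    ∃ Bs : Idx lam ⥤ C, IsLamSeq Bs ∧
      (∀ (α : Ordinal.{w}) (h : Order.succ α < lam), Mono (toSucc Bs α h) ∧
        Nonempty (cokernel (toSucc Bs α h) ≅ cokernel (toSucc Fs α h))) ∧
      ∃ cB : Cocone Bs, Nonempty (IsColimit cB) ∧
        ∃ (e0 : A ≅ Bs.obj ⟨0, hlam⟩) (e1 : cB.pt ≅ B),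
          j = e0.hom ≫ cB.ι.app ⟨0, hlam⟩ ≫ e1.hom := by
  haveI hMj : Mono j := hse.mono_f
  haveI hEg : Epi g := hse.epi_g
  refine ⟨pbFunctor Fs cF g, ?_, ?_, ?_⟩
  · -- λ-sequence: smoothness at limit ordinals
    refine ⟨fun γ hγ hlim => ?_⟩
    obtain ⟨hcγ⟩ := hFs.smooth γ hγ hlim
    refine ⟨isColimitOfExistsUnique (restrictCocone (pbFunctor Fs cF g) hγ)
      (fun T s hs => ?_)⟩
    exact key_existsUnique (⟨0, hlim.pos⟩ : Idx γ)
      (fun b => ⟨idxLe zero_le⟩)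
      (restrictCocone Fs hγ) hcγ (pullback.snd g (cF.ι.app ⟨γ, hγ⟩)) (Abelian.epi_pullback_of_epi_f _ _)
      (fun b => (pbFunctor Fs cF g).map (idxLe b.2.le))
      ⟨fun b => pullback.snd g (cF.ι.app ⟨b.1, b.2.trans hγ⟩),
        fun a b φ => pbFunctor_map_snd Fs cF g ((idxRes hγ).map φ)⟩
      (fun {i jj} φ => by
        show (pbFunctor Fs cF g).map ((idxRes hγ).map φ)
            ≫ (pbFunctor Fs cF g).map (idxLe jj.2.le)
          = (pbFunctor Fs cF g).map (idxLe i.2.le)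
        rw [← Functor.map_comp]
        rfl)
      (fun b => pbFunctor_isPullback Fs cF g (idxLe b.2.le)) s hs
  · -- the successor maps are monos with the same cokernels
    intro α h
    have hrel := pbFunctor_isPullback Fs cF g
      (a := ⟨α, (Order.lt_succ α).trans h⟩) (b := ⟨Order.succ α, h⟩)
      (idxLe (Order.le_succ α))
    exact ⟨mono_of_isPullback_of_mono hrel (hmono α h),
      coker_iso_of_isPullback_of_epi hrel (Abelian.epi_pullback_of_epi_f _ _)
        (Abelian.epi_pullback_of_epi_f _ _)⟩
  · -- the colimit cocone, the initial iso and the compatibility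
    refine ⟨⟨B, ⟨fun α => pullback.fst g (cF.ι.app α), fun a b φ => by
      rw [pbFunctor_map_fst]; exact (Category.comp_id _).symm⟩⟩, ⟨?_⟩, ?_⟩
    · refine isColimitOfExistsUnique _ (fun T s hs => ?_)
      exact key_existsUnique (⟨0, hlam⟩ : Idx lam)
        (fun α => ⟨idxLe zero_le⟩) cF hcF g inferInstance
        (fun α => pullback.fst g (cF.ι.app α))
        ⟨fun α => pullback.snd g (cF.ι.app α),
          fun a b φ => pbFunctor_map_snd Fs cF g φ⟩
        (fun {i jj} φ => pbFunctor_map_fst Fs cF g φ)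
        (fun α => IsPullback.of_hasPullback g (cF.ι.app α)) s hs
    · have hι0 : cF.ι.app ⟨0, hlam⟩ = 0 := h0.eq_of_src _ _
      have hom0 : j ≫ g = (0 : A ⟶ Fs.obj ⟨0, hlam⟩) ≫ cF.ι.app ⟨0, hlam⟩ := by
        rw [w, zero_comp]
      have hfst0 : pullback.fst g (cF.ι.app ⟨0, hlam⟩) ≫ g = 0 := by
        rw [pullback.condition, hι0, comp_zero]
      obtain ⟨r, hr⟩ : { l : pullback g (cF.ι.app ⟨0, hlam⟩) ⟶ A // l ≫ j
          = pullback.fst g (cF.ι.app ⟨0, hlam⟩) } :=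
        KernelFork.IsLimit.lift' hse.fIsKernel _ hfst0
      refine ⟨⟨pullback.lift j 0 hom0, r, ?_, ?_⟩, Iso.refl B, ?_⟩
      · erw [← cancel_mono j, Category.assoc, hr, pullback.lift_fst, Category.id_comp]
      · apply pullback.hom_ext
        · erw [Category.assoc, pullback.lift_fst, hr, Category.id_comp]
        · exact h0.eq_of_tgt _ _
      · show j = pullback.lift j 0 hom0 ≫ pullback.fst g (cF.ι.app ⟨0, hlam⟩) ≫ 𝟙 B
        rw [Category.comp_id, pullback.lift_fst]


end Paper
end

section
/- (Eklof Lemma) Let 𝒢 be a Grothendieck category. Suppose (X_α)_{α<λ} is a λ-sequence with X_0 = 0 whose composition is 0 → X (so X = colim_{α<λ} X_α) and whose successor maps i_{α,α+1} : X_α → X_{α+1} are all monomorphisms. If Y is an object of 𝒢 such that Ext¹(Coker(i_{α,α+1}), Y) = 0 for every α < λ, then Ext¹(X, Y) = 0. -/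
universe w v u

open CategoryTheory CategoryTheory.Limits Opposite

namespace Paper

variable {C : Type u} [Category.{v} C]

-- A Grothendieck category: an abelian category with a separator (generator), with all
-- colimits, in which filtered colimits are exact (AB5).
variable {C : Type u} [Category.{v} C] [Abelian C] [HasColimits C] [AB5 C] [HasSeparator C]


section EklofAux

variable {C : Type u} [Category.{v} C]

section AbelianAux

variable [Abelian C]

lemma extend_section {A B Y Z X : C} (i : A ⟶ B) [Mono i]
    (hY : Ext1IsZero (cokernel i) Y)
    (f : Y ⟶ Z) (g : Z ⟶ X) (w : f ≫ g = 0)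
    (hse : (ShortComplex.mk f g w).ShortExact)
    (u : A ⟶ Z) (v : B ⟶ X) (huv : u ≫ g = i ≫ v) :
    ∃ s : B ⟶ Z, i ≫ s = u ∧ s ≫ g = v := by
  haveI := hse.epi_g
  haveI := hse.mono_f
  set p1 : pullback g v ⟶ Z := pullback.fst g v with hp1
  set p2 : pullback g v ⟶ B := pullback.snd g v with hp2
  set f' : Y ⟶ pullback g v := pullback.lift f 0 (by simp [w]) with hf'
  have hf'1 : f' ≫ p1 = f := pullback.lift_fst _ _ _
  have hf'2 : f' ≫ p2 = 0 := pullback.lift_snd _ _ _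
  haveI : Mono f' := by
    have : Mono (f' ≫ p1) := by rw [hf'1]; infer_instance
    exact mono_of_mono f' p1
  have hker : IsLimit (KernelFork.ofι f' hf'2) := by
    refine KernelFork.IsLimit.ofι' f' hf'2 (fun {W} t ht => ?_)
    have h1 : (t ≫ p1) ≫ g = 0 := by
      rw [Category.assoc, pullback.condition, ← Category.assoc, ht, zero_comp]
    obtain ⟨l, hl⟩ := KernelFork.IsLimit.lift' (hse.exact.fIsKernel) (t ≫ p1) h1
    simp only [Fork.ι_ofι] at hl
    refine ⟨l, ?_⟩
    apply pullback.hom_ext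
    · rw [Category.assoc, hf'1, hl]
    · rw [Category.assoc, hf'2, comp_zero, ht]
  have hexP : (ShortComplex.mk f' p2 hf'2).Exact :=
    ShortComplex.exact_of_f_is_kernel _ hker
  have hcokP : IsColimit (CokernelCofork.ofπ p2 hf'2) := hexP.gIsCokernel
  set q : A ⟶ pullback g v := pullback.lift u i huv with hq
  have hq1 : q ≫ p1 = u := pullback.lift_fst _ _ _
  have hq2 : q ≫ p2 = i := pullback.lift_snd _ _ _
  haveI : Mono q := by
    have : Mono (q ≫ p2) := by rw [hq2]; infer_instance
    exact mono_of_mono q p2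
  set π : pullback g v ⟶ cokernel q := cokernel.π q with hπ
  set f'' : Y ⟶ cokernel q := f' ≫ π with hf''
  have hcond : q ≫ p2 ≫ cokernel.π i = 0 := by
    rw [← Category.assoc, hq2, cokernel.condition]
  set g'' : cokernel q ⟶ cokernel i := cokernel.desc q (p2 ≫ cokernel.π i) hcond with hg''
  have hπg : π ≫ g'' = p2 ≫ cokernel.π i := cokernel.π_desc _ _ _
  have hw2 : f'' ≫ g'' = 0 := by
    rw [hf'', Category.assoc, hπg, ← Category.assoc, hf'2, zero_comp]
  haveI : Epi g'' := by
    have : Epi (π ≫ g'') := by rw [hπg]; exact epi_comp _ _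
    exact epi_of_epi π g''
  have hexq : (ShortComplex.mk q π (cokernel.condition q)).Exact :=
    ShortComplex.exact_of_g_is_cokernel _ (cokernelIsCokernel q)
  have hkerq : IsLimit (KernelFork.ofι q (cokernel.condition q)) := hexq.fIsKernel
  haveI : Mono f'' := by
    apply Preadditive.mono_of_cancel_zero
    intro W t ht
    have h1 : (t ≫ f') ≫ π = 0 := by rw [Category.assoc, ← hf'', ht]
    obtain ⟨l, hl⟩ := KernelFork.IsLimit.lift' hkerq (t ≫ f') h1
    simp only [Fork.ι_ofι] at hl
    have hli : l ≫ i = 0 := by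
      rw [← hq2, ← Category.assoc, hl, Category.assoc, hf'2, comp_zero]
    have hl0 : l = 0 := zero_of_comp_mono i hli
    rw [hl0, zero_comp] at hl
    exact zero_of_comp_mono f' hl.symm
  have hcoker : IsColimit (CokernelCofork.ofπ g'' hw2) := by
    refine CokernelCofork.IsColimit.ofπ' g'' hw2 (fun {W} k hk => ?_)
    have h1 : f' ≫ π ≫ k = 0 := by rw [← Category.assoc, ← hf'', hk]
    obtain ⟨m, hm⟩ := CokernelCofork.IsColimit.desc' hcokP (π ≫ k) h1
    simp only [Cofork.π_ofπ] at hm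
    have h2 : i ≫ m = 0 := by
      rw [← hq2, Category.assoc, hm, ← Category.assoc, cokernel.condition, zero_comp]
    refine ⟨cokernel.desc i m h2, ?_⟩
    rw [← cancel_epi π, ← Category.assoc, hπg, Category.assoc, cokernel.π_desc, hm]
  have hseQ : (ShortComplex.mk f'' g'' hw2).ShortExact :=
    { exact := ShortComplex.exact_of_g_is_cokernel _ hcoker }
  obtain ⟨r, hr⟩ := hY _ f'' g'' hw2 hseQ
  have hr1 : f' ≫ π ≫ r = 𝟙 Y := by rw [← Category.assoc, ← hf'', hr]
  have hr2 : q ≫ π ≫ r = 0 := by rw [← Category.assoc, cokernel.condition, zero_comp]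
  have ht0 : f' ≫ (𝟙 (pullback g v) - (π ≫ r) ≫ f') = 0 := by
    rw [Preadditive.comp_sub, Category.comp_id, ← Category.assoc, hr1, Category.id_comp, sub_self]
  obtain ⟨σ, hσ⟩ := CokernelCofork.IsColimit.desc' hcokP _ ht0
  simp only [Cofork.π_ofπ] at hσ
  have hσ2 : σ ≫ p2 = 𝟙 B := by
    rw [← cancel_epi p2, ← Category.assoc, hσ, Preadditive.sub_comp, Category.id_comp,
      Category.assoc, hf'2, comp_zero, sub_zero, Category.comp_id]
  have hσ3 : i ≫ σ = q := by
    rw [← hq2, Category.assoc, hσ, Preadditive.comp_sub, Category.comp_id]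
    rw [show q ≫ (π ≫ r) ≫ f' = (q ≫ π ≫ r) ≫ f' by simp only [Category.assoc], hr2,
      zero_comp, sub_zero]
  refine ⟨σ ≫ p1, ?_, ?_⟩
  · rw [← Category.assoc, hσ3, hq1]
  · rw [Category.assoc, pullback.condition, ← Category.assoc, hσ2, Category.id_comp]


end AbelianAux

/-- A partial compatible family of sections over an initial segment of `Idx lam`. -/
abbrev PartialSec {lam : Ordinal.{w}} (F : Idx lam ⥤ C) (c : Cocone F) {Z : C} (g : Z ⟶ c.pt) :=
  {p : Ordinal.{w} × (∀ α : Idx lam, F.obj α ⟶ Z) //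
    p.1 ≤ lam ∧ (∀ α : Idx lam, α.1 < p.1 → p.2 α ≫ g = c.ι.app α) ∧
      ∀ (α β : Idx lam) (hab : α.1 ≤ β.1), β.1 < p.1 →
        F.map (idxLe hab) ≫ p.2 β = p.2 α}

/-- Extension order on partial families. -/
def PRel {lam : Ordinal.{w}} (F : Idx lam ⥤ C) (c : Cocone F) {Z : C} (g : Z ⟶ c.pt) :
    PartialSec F c g → PartialSec F c g → Prop := fun p q =>
  p.1.1 ≤ q.1.1 ∧ ∀ α : Idx lam, α.1 < p.1.1 → p.1.2 α = q.1.2 α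

lemma prel_chains_bounded {lam : Ordinal.{w}} (F : Idx lam ⥤ C) (c : Cocone F) {Z : C}
    [Limits.HasZeroMorphisms C] (g : Z ⟶ c.pt) (ch : Set (PartialSec F c g))
    (hch : IsChain (PRel F c g) ch) : ∃ ub, ∀ a ∈ ch, PRel F c g a ub := by
  classical
  by_cases hne : ch.Nonempty
  · have hbdd : BddAbove ((fun p : PartialSec F c g => p.1.1) '' ch) :=
      ⟨lam, by rintro x ⟨p, hp, rfl⟩; exact p.2.1⟩
    have hγlam : sSup ((fun p : PartialSec F c g => p.1.1) '' ch) ≤ lam :=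
      csSup_le (hne.image _) (by rintro x ⟨p, hp, rfl⟩; exact p.2.1)
    set γ := sSup ((fun p : PartialSec F c g => p.1.1) '' ch) with hγdef
    have key : ∀ x : Ordinal.{w}, x < γ → ∃ p : PartialSec F c g, p ∈ ch ∧ x < p.1.1 := by
      intro x hx
      obtain ⟨b, ⟨p, hp, rfl⟩, hb⟩ := (lt_csSup_iff hbdd (hne.image _)).1 hx
      exact ⟨p, hp, hb⟩
    have pairAgree : ∀ p ∈ ch, ∀ q ∈ ch, ∀ α : Idx lam,
        α.1 < p.1.1 → α.1 < q.1.1 → p.1.2 α = q.1.2 α := by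
      intro p hp q hq α h1 h2
      by_cases hpq : p = q
      · subst hpq; rfl
      · rcases hch hp hq hpq with h | h
        · exact h.2 α h1
        · exact (h.2 α h2).symm
    refine ⟨⟨(γ, fun α => if h : α.1 < γ then ((key α.1 h).choose).1.2 α else 0),
      hγlam, ?_, ?_⟩, ?_⟩
    · intro α hα
      dsimp only at hα ⊢
      rw [dif_pos hα]
      exact (key α.1 hα).choose.2.2.1 α (key α.1 hα).choose_spec.2
    · intro α β hab hβ
      dsimp only at hβ ⊢
      have hα : α.1 < γ := lt_of_le_of_lt hab hβ
      rw [dif_pos hβ, dif_pos hα]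
      rw [(key β.1 hβ).choose.2.2.2 α β hab (key β.1 hβ).choose_spec.2]
      exact pairAgree _ (key β.1 hβ).choose_spec.1 _ (key α.1 hα).choose_spec.1 α
        (lt_of_le_of_lt hab (key β.1 hβ).choose_spec.2) (key α.1 hα).choose_spec.2
    · intro a ha
      refine ⟨le_csSup hbdd ⟨a, ha, rfl⟩, ?_⟩
      intro α hα
      have hαγ : α.1 < γ := lt_of_lt_of_le hα (le_csSup hbdd ⟨a, ha, rfl⟩)
      show a.1.2 α = if h : α.1 < γ then ((key α.1 h).choose).1.2 α else 0
      rw [dif_pos hαγ]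
      exact pairAgree a ha _ (key α.1 hαγ).choose_spec.1 α hα (key α.1 hαγ).choose_spec.2
  · refine ⟨⟨(0, fun _ => 0), zero_le, ?_, ?_⟩, ?_⟩
    · intro α hα; exact absurd hα (by simp)
    · intro α β hab hβ; exact absurd hβ (by simp)
    · intro a ha; exact absurd ⟨a, ha⟩ hne

end EklofAux

/-- Proposition 2.12 (the Eklof lemma): if `(X_α)` is a `λ`-sequence with `X_0 = 0`,
monomorphic successor maps and colimit `X`, and `Ext¹(Coker(i_{α,α+1}), Y) = 0` for
every `α`, then `Ext¹(X, Y) = 0`. -/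
theorem eklof_lemma {lam : Ordinal.{w}} (hlam : (0 : Ordinal.{w}) < lam)
    (F : Idx lam ⥤ C) (hF : IsLamSeq F)
    (h0 : IsZero (F.obj ⟨0, hlam⟩))
    (hmono : ∀ (α : Ordinal.{w}) (h : Order.succ α < lam), Mono (toSucc F α h))
    (c : Cocone F) (hc : IsColimit c)
    (Y : C)
    (hY : ∀ (α : Ordinal.{w}) (h : Order.succ α < lam),
      Ext1IsZero (cokernel (toSucc F α h)) Y) :
    Ext1IsZero c.pt Y := by
  classical
  intro Z f g w hse
  haveI hmf : Mono f := hse.mono_f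
  suffices hs : ∃ s : c.pt ⟶ Z, s ≫ g = 𝟙 c.pt by
    obtain ⟨s, hsg⟩ := hs
    have he : (𝟙 Z - g ≫ s) ≫ g = 0 := by
      rw [Preadditive.sub_comp, Category.id_comp, Category.assoc, hsg, Category.comp_id,
        sub_self]
    obtain ⟨r, hr⟩ := KernelFork.IsLimit.lift' hse.exact.fIsKernel _ he
    simp only [Fork.ι_ofι] at hr
    refine ⟨r, ?_⟩
    rw [← cancel_mono f, Category.assoc, hr, Preadditive.comp_sub, Category.comp_id,
      ← Category.assoc, w, zero_comp, sub_zero, Category.id_comp]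
  obtain ⟨m, hm⟩ := exists_maximal_of_chains_bounded (prel_chains_bounded F c g)
    (fun {a b c'} hab hbc => ⟨hab.1.trans hbc.1,
      fun α hα => (hab.2 α hα).trans (hbc.2 α (lt_of_lt_of_le hα hab.1))⟩)
  have hmtop : m.1.1 = lam := by
    by_contra hne
    have hlt : m.1.1 < lam := lt_of_le_of_ne m.2.1 hne
    have hex : ∀ (γv : Ordinal.{w}) (hγp : γv < lam), γv = m.1.1 →
        ∃ w' : F.obj ⟨γv, hγp⟩ ⟶ Z, w' ≫ g = c.ι.app ⟨γv, hγp⟩ ∧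
          ∀ (α : Idx lam) (hα : α.1 < γv), F.map (idxLe hα.le) ≫ w' = m.1.2 α := by
      intro γv hγp hγm
      rcases Ordinal.zero_or_succ_or_isSuccLimit γv with h0' | ⟨δ, hδ⟩ | hlim
      · subst h0'
        refine ⟨0, h0.eq_of_src _ _, ?_⟩
        intro α hα; exact absurd hα (by simp)
      · subst hδ
        haveI := hmono δ hγp
        have hδm : δ < m.1.1 := by rw [← hγm]; exact Order.lt_succ δ
        have hδlam : δ < lam := lt_trans (Order.lt_succ δ) hγp
        have huv : m.1.2 ⟨δ, hδlam⟩ ≫ g = toSucc F δ hγp ≫ c.ι.app ⟨Order.succ δ, hγp⟩ := by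
          rw [m.2.2.1 ⟨δ, hδlam⟩ hδm]
          exact (c.w (idxLe (a := ⟨δ, hδlam⟩) (b := ⟨Order.succ δ, hγp⟩) (Order.le_succ δ))).symm
        obtain ⟨w', hw1, hw2⟩ := extend_section (toSucc F δ hγp) (hY δ hγp) f g w hse
          (m.1.2 ⟨δ, hδlam⟩) (c.ι.app ⟨Order.succ δ, hγp⟩) huv
        refine ⟨w', hw2, ?_⟩
        intro α hα
        have hαδ : α.1 ≤ δ := Order.lt_succ_iff.1 hα
        have heq : idxLe (a := α) (b := ⟨Order.succ δ, hγp⟩) hα.le =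
            idxLe hαδ ≫ idxLe (a := ⟨δ, hδlam⟩) (Order.le_succ δ) := Subsingleton.elim _ _
        rw [heq, F.map_comp, Category.assoc]
        rw [show F.map (idxLe (a := ⟨δ, hδlam⟩) (b := ⟨Order.succ δ, hγp⟩)
          (Order.le_succ δ)) ≫ w' = m.1.2 ⟨δ, hδlam⟩ from hw1]
        exact m.2.2.2 α ⟨δ, hδlam⟩ hαδ hδm
      · obtain ⟨hco⟩ := hF.smooth γv hγp hlim
        have hmem : ∀ b : Idx γv, b.1 < m.1.1 := fun b => hγm ▸ b.2
        refine ⟨hco.desc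
          { pt := Z
            ι :=
              { app := fun b => m.1.2 ⟨b.1, b.2.trans hγp⟩
                naturality := fun a b ff => by
                  dsimp only [Functor.comp_map, Functor.const_obj_map]
                  refine Eq.trans ?_ (Category.comp_id _).symm
                  have hnat := m.2.2.2 ⟨a.1, a.2.trans hγp⟩ ⟨b.1, b.2.trans hγp⟩
                    (leOfHom ff) (hmem b)
                  refine Eq.trans ?_ hnat
                  congr 1 } }, ?_, ?_⟩
        · refine hco.hom_ext fun b => ?_
          erw [← Category.assoc, hco.fac]
          dsimp [restrictCocone]
          erw [m.2.2.1 ⟨b.1, b.2.trans hγp⟩ (hmem b)]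
          exact (c.w (idxLe (a := ⟨b.1, b.2.trans hγp⟩) (b := ⟨γv, hγp⟩) b.2.le)).symm
        · intro α hα
          exact hco.fac _ ⟨α.1, hα⟩
    obtain ⟨w', hw'1, hw'2⟩ := hex m.1.1 hlt rfl
    have hsucc : Order.succ m.1.1 ≤ lam := Order.succ_le_of_lt hlt
    have hnewm : ∃ newm : PartialSec F c g, newm.1.1 = Order.succ m.1.1 ∧ PRel F c g m newm := by
      refine ⟨⟨(Order.succ m.1.1,
        fun α => if h : α.1 ≤ m.1.1 then F.map (idxLe (b := ⟨m.1.1, hlt⟩) h) ≫ w' else 0),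
        hsucc, ?_, ?_⟩, rfl, ?_⟩
      · intro α hα
        dsimp only at hα ⊢
        have hα' : α.1 ≤ m.1.1 := Order.lt_succ_iff.1 hα
        rw [dif_pos hα', Category.assoc, hw'1]
        exact c.w (idxLe hα')
      · intro α β hab hβ
        dsimp only at hβ ⊢
        have hβ' : β.1 ≤ m.1.1 := Order.lt_succ_iff.1 hβ
        have hα' : α.1 ≤ m.1.1 := hab.trans hβ'
        rw [dif_pos hβ', dif_pos hα']
        have heq : idxLe (a := α) (b := ⟨m.1.1, hlt⟩) hα' =
            idxLe hab ≫ idxLe hβ' := Subsingleton.elim _ _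
        rw [← Category.assoc, ← F.map_comp, ← heq]
      · refine ⟨(Order.lt_succ m.1.1).le, ?_⟩
        intro α hα
        show m.1.2 α = if h : α.1 ≤ m.1.1 then F.map (idxLe (b := ⟨m.1.1, hlt⟩) h) ≫ w' else 0
        rw [dif_pos hα.le]
        exact (hw'2 α hα).symm
    obtain ⟨newm, hnew1, hnew2⟩ := hnewm
    have hback : newm.1.1 ≤ m.1.1 := (hm newm hnew2).1
    rw [hnew1] at hback
    exact absurd hback (not_le.2 (Order.lt_succ m.1.1))
  have hall : ∀ α : Idx lam, α.1 < m.1.1 := fun α => lt_of_lt_of_le α.2 hmtop.ge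
  refine ⟨hc.desc
    { pt := Z
      ι :=
        { app := fun α => m.1.2 α
          naturality := fun a b ff => by
            dsimp
            rw [Category.comp_id]
            have hnat := m.2.2.2 a b (leOfHom ff) (hall b)
            rw [← hnat]
            congr 1 } }, ?_⟩
  refine hc.hom_ext fun j => ?_
  rw [← Category.assoc, hc.fac]
  exact (m.2.2.1 j (hall j)).trans (Category.comp_id _).symm


end Paper
end

section
/- Let 𝒟 be a triangulated category in which idempotents split, and let 𝒳 ⊆ 𝒟 be a full subcategory which is suspended (closed under extensions and direct summands, and with 𝒳[1] ⊆ 𝒳) and precovering. Then the inclusion functor 𝒳 ↪ 𝒟 has a right adjoint. Moreover, for every object M of 𝒟 there is a distinguished triangle X → M → Y → X[1] with X ∈ 𝒳 and Y ∈ 𝒳^⊥, where 𝒳^⊥ = {Y : Hom(X′, Y) = 0 for all X′ ∈ 𝒳}; that is, (𝒳, 𝒳^⊥) satisfies the axioms of a t-structure (up to shift). -/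
universe v u

open CategoryTheory CategoryTheory.Limits CategoryTheory.Pretriangulated

namespace Paper

section Aux

variable {D : Type u} [Category.{v} D] [HasZeroObject D] [HasShift D ℤ] [Preadditive D]
    [∀ n : ℤ, (shiftFunctor D n).Additive] [Pretriangulated D]
    [IsIdempotentComplete D]
    (𝒳 : Set D)
    (hshift : ∀ X ∈ 𝒳, (X⟦(1 : ℤ)⟧) ∈ 𝒳)
    (hsummand : ∀ (X M : D) (s : M ⟶ X) (r : X ⟶ M), s ≫ r = 𝟙 M → X ∈ 𝒳 → M ∈ 𝒳)
    (hext : ∀ T : Triangle D, (T ∈ distTriang D) → T.obj₁ ∈ 𝒳 → T.obj₃ ∈ 𝒳 → T.obj₂ ∈ 𝒳)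
    (hprecover : ∀ M : D, ∃ X ∈ 𝒳, ∃ f : X ⟶ M,
      ∀ X' ∈ 𝒳, ∀ g : X' ⟶ M, ∃ h : X' ⟶ X, h ≫ f = g)

include hshift hsummand hext hprecover in
/-- The key construction: every object `M` admits a distinguished triangle
`X ⟶ M ⟶ Y ⟶ X⟦1⟧` with `X ∈ 𝒳` and `Y ∈ 𝒳^⊥`. -/
theorem key (M : D) :
    ∃ (X Y : D) (f : X ⟶ M) (g : M ⟶ Y) (h : Y ⟶ X⟦(1 : ℤ)⟧),
      X ∈ 𝒳 ∧ (∀ X' ∈ 𝒳, ∀ φ : X' ⟶ Y, φ = 0) ∧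
        Triangle.mk f g h ∈ distTriang D := by
  have hiso : ∀ {A B : D}, (A ≅ B) → A ∈ 𝒳 → B ∈ 𝒳 := fun e hA =>
    hsummand _ _ e.inv e.hom e.inv_hom_id hA
  -- Step 1: a precover of `M` and its cone.
  obtain ⟨X₀, hX₀, f, hf⟩ := hprecover M
  obtain ⟨Y, g, δ, hT⟩ := Pretriangulated.distinguished_cocone_triangle f
  have hX₁ : (X₀⟦(1 : ℤ)⟧) ∈ 𝒳 := hshift _ hX₀
  have hXneg : ((X₀⟦(1 : ℤ)⟧)⟦(-1 : ℤ)⟧) ∈ 𝒳 :=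
    hiso ((shiftEquiv D (1 : ℤ)).unitIso.app X₀) hX₀
  -- Step 2: Wakamatsu-type lemma.
  have hW : ∀ (X' : D), X' ∈ 𝒳 → ∀ φ : X' ⟶ Y,
      ∃ ψ : X₀⟦(1 : ℤ)⟧ ⟶ Y, φ = (φ ≫ δ) ≫ ψ := by
    intro X' hX' φ
    obtain ⟨C, c, d, hTe⟩ := Pretriangulated.distinguished_cocone_triangle (φ ≫ δ)
    have hT₂ := inv_rot_of_distTriang _ hTe
    have hT₃ := inv_rot_of_distTriang _ hT₂
    have hE : ((Triangle.mk (φ ≫ δ) c d).invRotate).obj₁ ∈ 𝒳 := by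
      refine hext _ hT₃ ?_ ?_
      · exact hXneg
      · exact hX'
    set T₂ := (Triangle.mk (φ ≫ δ) c d).invRotate with hT₂def
    have hb : T₂.mor₁ ≫ (φ ≫ δ) = 0 := comp_distTriang_mor_zero₁₂ _ hT₂
    have hbφ : T₂.mor₁ ≫ φ = 0 := by
      obtain ⟨m, hm⟩ := Triangle.coyoneda_exact₃ _ hT (T₂.mor₁ ≫ φ)
        ((Category.assoc _ _ _).trans hb)
      obtain ⟨h', hh'⟩ := hf _ hE m
      have hfg : f ≫ g = 0 := comp_distTriang_mor_zero₁₂ _ hT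
      have : T₂.mor₁ ≫ φ = h' ≫ (f ≫ g) := by
        exact hm.trans (by rw [← hh']; exact Category.assoc _ _ _)
      rw [this, hfg, Limits.comp_zero]
    obtain ⟨ψ, hψ⟩ := Triangle.yoneda_exact₂ _ hT₂ φ hbφ
    exact ⟨ψ, hψ⟩
  -- Step 3: the idempotent `e = δ ≫ ψ` on `Y`.
  obtain ⟨W, hWmem, q, hq⟩ := hprecover Y
  obtain ⟨ψ, hψ⟩ := hW W hWmem q
  set e : Y ⟶ Y := δ ≫ ψ with hedef
  have he_comp : ∀ (X' : D), X' ∈ 𝒳 → ∀ φ : X' ⟶ Y, φ ≫ e = φ := by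
    intro X' hX' φ
    obtain ⟨t, ht⟩ := hq X' hX' φ
    rw [← ht, Category.assoc, hedef]
    rw [show q ≫ δ ≫ ψ = (q ≫ δ) ≫ ψ by rw [Category.assoc]]
    rw [← hψ]
  have he_idem : (𝟙 Y - e) ≫ (𝟙 Y - e) = 𝟙 Y - e := by
    have : e ≫ e = e := by
      have := he_comp _ hX₁ ψ
      rw [hedef, Category.assoc, this]
    simp only [Preadditive.comp_sub, Preadditive.sub_comp, Category.id_comp,
      Category.comp_id, this]
    abel
  -- Step 4: split the idempotent `𝟙 - e`.
  obtain ⟨Y₁, i₁, p₁, hip, hpi⟩ :=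
    IsIdempotentComplete.idempotents_split Y (𝟙 Y - e) he_idem
  have hi₁e : i₁ ≫ e = 0 := by
    have h1 : i₁ ≫ (𝟙 Y - e) = i₁ := by
      rw [← hpi, ← Category.assoc, hip, Category.id_comp]
    have h2 : i₁ - i₁ ≫ e = i₁ := by
      simpa only [Preadditive.comp_sub, Category.comp_id] using h1
    exact sub_eq_self.mp h2
  have horth : ∀ (X' : D), X' ∈ 𝒳 → ∀ φ : X' ⟶ Y₁, φ = 0 := by
    intro X' hX' φ
    have h1 : (φ ≫ i₁) ≫ e = φ ≫ i₁ := he_comp _ hX' (φ ≫ i₁)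
    have h2 : (φ ≫ i₁) ≫ e = 0 := by rw [Category.assoc, hi₁e, Limits.comp_zero]
    have h3 : φ ≫ i₁ = 0 := by rw [← h1, h2]
    have : φ ≫ i₁ ≫ p₁ = 0 := by rw [← Category.assoc, h3, Limits.zero_comp]
    rwa [hip, Category.comp_id] at this
  -- Step 5: the triangle on `g ≫ p₁` and comparison morphisms.
  obtain ⟨Z, c, d, hT₁⟩ := Pretriangulated.distinguished_cocone_triangle (g ≫ p₁)
  have hTrot := rot_of_distTriang _ hT
  -- `T.rotate = (M, Y, X₀⟦1⟧, g, δ, -f⟦1⟧')`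
  obtain ⟨u, hu₁, hu₂⟩ := Pretriangulated.complete_distinguished_triangle_morphism
    (Triangle.mk f g δ).rotate (Triangle.mk (g ≫ p₁) c d) hTrot hT₁ (𝟙 M) p₁
    (by show g ≫ p₁ = 𝟙 M ≫ (g ≫ p₁); rw [Category.id_comp])
  have hgδ : g ≫ δ = 0 := comp_distTriang_mor_zero₂₃ _ hT
  have hge : g ≫ e = 0 := by
    rw [hedef, ← Category.assoc, hgδ, Limits.zero_comp]
  obtain ⟨v, hv₁, hv₂⟩ := Pretriangulated.complete_distinguished_triangle_morphism
    (Triangle.mk (g ≫ p₁) c d) (Triangle.mk f g δ).rotate hT₁ hTrot (𝟙 M) i₁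
    (by
      show (g ≫ p₁) ≫ i₁ = 𝟙 M ≫ g
      rw [Category.id_comp, Category.assoc, hpi, Preadditive.comp_sub,
        Category.comp_id, hge, sub_zero])
  -- `hu₁ : δ ≫ u = p₁ ≫ c`, `hu₂ : (-f⟦1⟧') ≫ (𝟙 M)⟦1⟧' = u ≫ d`
  -- `hv₁ : c ≫ v = i₁ ≫ δ`, `hv₂ : d ≫ (𝟙 M)⟦1⟧' = v ≫ (-f⟦1⟧')`
  change X₀⟦(1 : ℤ)⟧ ⟶ Z at u
  change Z ⟶ X₀⟦(1 : ℤ)⟧ at v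
  change δ ≫ u = p₁ ≫ c at hu₁
  change (-(f⟦(1 : ℤ)⟧')) ≫ (𝟙 M)⟦(1 : ℤ)⟧' = u ≫ d at hu₂
  change c ≫ v = i₁ ≫ δ at hv₁
  change d ≫ (𝟙 M)⟦(1 : ℤ)⟧' = v ≫ (-(f⟦(1 : ℤ)⟧')) at hv₂
  simp only [CategoryTheory.Functor.map_id, Category.comp_id] at hu₂ hv₂
  -- Build the endomorphism of the triangle on `g ≫ p₁`.
  have hud : u ≫ d = -(f⟦(1 : ℤ)⟧') := hu₂.symm
  let φc : Triangle.mk (g ≫ p₁) c d ⟶ Triangle.mk (g ≫ p₁) c d :=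
    { hom₁ := 𝟙 M
      hom₂ := 𝟙 Y₁
      hom₃ := v ≫ u
      comm₁ := by show (g ≫ p₁) ≫ 𝟙 Y₁ = 𝟙 M ≫ (g ≫ p₁); rw [Category.id_comp, Category.comp_id]
      comm₂ := by
        show c ≫ (v ≫ u) = 𝟙 Y₁ ≫ c
        rw [Category.id_comp, ← Category.assoc, hv₁, Category.assoc, hu₁,
          ← Category.assoc, hip, Category.id_comp]
      comm₃ := by
        show d ≫ (𝟙 M)⟦(1 : ℤ)⟧' = (v ≫ u) ≫ d
        simp only [CategoryTheory.Functor.map_id, Category.comp_id]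
        rw [Category.assoc, hud]
        exact hv₂ }
  have hvu : IsIso (v ≫ u) := by
    have := isIso₃_of_isIso₁₂ φc hT₁ hT₁ (show IsIso (𝟙 M) by infer_instance)
      (show IsIso (𝟙 Y₁) by infer_instance)
    exact this
  have hsplit : v ≫ (u ≫ CategoryTheory.inv (v ≫ u)) = 𝟙 Z := by
    rw [← Category.assoc, IsIso.hom_inv_id]
  have hZ : (Z⟦(-1 : ℤ)⟧) ∈ 𝒳 := by
    refine hsummand _ _ ((shiftFunctor D (-1 : ℤ)).map v)
      ((shiftFunctor D (-1 : ℤ)).map (u ≫ CategoryTheory.inv (v ≫ u))) ?_ hXneg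
    rw [← CategoryTheory.Functor.map_comp, hsplit, CategoryTheory.Functor.map_id]
  -- Step 6: conclude with the inverse rotation.
  refine ⟨Z⟦(-1 : ℤ)⟧, Y₁, (Triangle.mk (g ≫ p₁) c d).invRotate.mor₁,
    (Triangle.mk (g ≫ p₁) c d).invRotate.mor₂,
    (Triangle.mk (g ≫ p₁) c d).invRotate.mor₃, hZ, ?_, ?_⟩
  · intro X' hX' φ
    exact horth X' hX' φ
  · exact inv_rot_of_distTriang _ hT₁

end Aux

/-- Proposition 3.6 (Neeman, Keller–Vossieck): if `𝒳` is a precovering suspended full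
subcategory of a triangulated category `D` with splitting idempotents, then the inclusion
`𝒳 ↪ D` has a right adjoint, and every object `M` fits in a distinguished triangle
`X ⟶ M ⟶ Y ⟶ X⟦1⟧` with `X ∈ 𝒳` and `Y ∈ 𝒳^⊥`. -/
theorem right_adjoint_of_precovering_suspended
    {D : Type u} [Category.{v} D] [HasZeroObject D] [HasShift D ℤ] [Preadditive D]
    [∀ n : ℤ, (shiftFunctor D n).Additive] [Pretriangulated D]
    [IsIdempotentComplete D]
    (𝒳 : Set D)
    (hshift : ∀ X ∈ 𝒳, (X⟦(1 : ℤ)⟧) ∈ 𝒳)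
    (hsummand : ∀ (X M : D) (s : M ⟶ X) (r : X ⟶ M), s ≫ r = 𝟙 M → X ∈ 𝒳 → M ∈ 𝒳)
    (hext : ∀ T : Triangle D, (T ∈ distTriang D) → T.obj₁ ∈ 𝒳 → T.obj₃ ∈ 𝒳 → T.obj₂ ∈ 𝒳)
    (hprecover : ∀ M : D, ∃ X ∈ 𝒳, ∃ f : X ⟶ M,
      ∀ X' ∈ 𝒳, ∀ g : X' ⟶ M, ∃ h : X' ⟶ X, h ≫ f = g) :
    (ObjectProperty.ι (fun X : D => X ∈ 𝒳)).IsLeftAdjoint ∧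
    ∀ M : D, ∃ (X Y : D) (f : X ⟶ M) (g : M ⟶ Y) (h : Y ⟶ X⟦(1 : ℤ)⟧),
      X ∈ 𝒳 ∧ (∀ X' ∈ 𝒳, ∀ φ : X' ⟶ Y, φ = 0) ∧
        Triangle.mk f g h ∈ distTriang D := by
  have hkey := key 𝒳 hshift hsummand hext hprecover
  refine ⟨?_, hkey⟩
  choose X Y f g h hX horth hdist using hkey
  let F : ObjectProperty.FullSubcategory (fun X : D => X ∈ 𝒳) ⥤ D := ObjectProperty.ι (fun X : D => X ∈ 𝒳)
  let Gobj : D → ObjectProperty.FullSubcategory (fun X : D => X ∈ 𝒳) := fun M => ⟨X M, hX M⟩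
  have hzero : ∀ (M : D) (A : D) (_ : A ∈ 𝒳) (v : A ⟶ X M), v ≫ f M = 0 → v = 0 := by
    intro M A hA v hv
    have hinv := inv_rot_of_distTriang _ (hdist M)
    obtain ⟨w, hw⟩ := Triangle.coyoneda_exact₂ _ hinv v hv
    -- `w : A ⟶ (Y M)⟦(-1:ℤ)⟧`
    have hw1 : ((shiftFunctor D (1 : ℤ)).map w ≫
        (shiftEquiv D (1 : ℤ)).counitIso.hom.app (Y M)) = 0 :=
      horth M _ (hshift _ hA) _
    have hw2 : (shiftFunctor D (1 : ℤ)).map w = 0 := by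
      exact (cancel_mono ((shiftEquiv D (1 : ℤ)).counitIso.hom.app (Y M))).1
        (hw1.trans Limits.zero_comp.symm)
    have hw0 : w = 0 := by
      apply (shiftFunctor D (1 : ℤ)).map_injective
      rw [hw2, Functor.map_zero]
    rw [hw, hw0]; exact Limits.zero_comp
  let toD : ∀ {A B : ObjectProperty.FullSubcategory (fun X : D => X ∈ 𝒳)}, (A ⟶ B) → (A.obj ⟶ B.obj) :=
    fun h' => h'.hom
  let toDX : ∀ {A : ObjectProperty.FullSubcategory (fun X : D => X ∈ 𝒳)} {M : D}, (A ⟶ Gobj M) → (A.obj ⟶ X M) :=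
    fun h' => h'.hom
  let k : ∀ (X' : ObjectProperty.FullSubcategory (fun X : D => X ∈ 𝒳)) (M : D),
      (X' ⟶ Gobj M) → (F.obj X' ⟶ M) := fun X' M h' => toDX h' ≫ f M
  have hbij : ∀ (X' : ObjectProperty.FullSubcategory (fun X : D => X ∈ 𝒳)) (M : D),
      Function.Bijective (k X' M) := by
    intro X' M
    constructor
    · intro h₁ h₂ hh
      have hsub : (toDX h₁ - toDX h₂) ≫ f M = 0 := by
        rw [Preadditive.sub_comp, sub_eq_zero]
        exact hh
      have h0 := hzero M X'.obj X'.property _ hsub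
      rw [sub_eq_zero] at h0
      exact InducedCategory.Hom.ext h0
    · intro u
      have hu : u ≫ g M = 0 := horth M _ X'.property _
      obtain ⟨h', hh'⟩ := Triangle.coyoneda_exact₂ _ (hdist M) u hu
      exact ⟨⟨h'⟩, hh'.symm⟩
  let E : ∀ (X' : ObjectProperty.FullSubcategory (fun X : D => X ∈ 𝒳)) (M : D),
      (F.obj X' ⟶ M) ≃ (X' ⟶ Gobj M) := fun X' M =>
    (Equiv.ofBijective (k X' M) (hbij X' M)).symm
  have hE : ∀ (X' : ObjectProperty.FullSubcategory (fun X : D => X ∈ 𝒳)) (M : D) (t : F.obj X' ⟶ M),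
      k X' M (E X' M t) = t := fun X' M t =>
    (Equiv.ofBijective (k X' M) (hbij X' M)).apply_symm_apply t
  have he : ∀ (X'' X' : ObjectProperty.FullSubcategory (fun X : D => X ∈ 𝒳)) (M : D) (f' : X'' ⟶ X')
      (g' : F.obj X' ⟶ M), E X'' M (F.map f' ≫ g') = f' ≫ E X' M g' := by
    intro X'' X' M f' g'
    apply (hbij X'' M).1
    rw [hE]
    have h2 : k X'' M (f' ≫ E X' M g') =
        toD f' ≫ k X' M (E X' M g') := by
      show (toD f' ≫ toDX (E X' M g')) ≫ f M =
        toD f' ≫ (toDX (E X' M g') ≫ f M)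
      rw [Category.assoc]
    rw [h2, hE]
    rfl
  exact ⟨_, ⟨Adjunction.adjunctionOfEquivRight E he⟩⟩

end Paper
end
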